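/- Sign change of the weights β_j^{(m)}: for the linear-detrending case, with β_j^{(m)} := α_j^{(m)}/α_0^{(m)}, one has 0 < β_j^{(m)} ≤ 1 for 0 ≤ j < j₀(m) and −1 ≤ β_j^{(m)} ≤ 0 for j₀(m) ≤ j < m, where j₀(m) = [√(105m² + 210m + 9) − 9(m+1)]/6. -/
import Mathlib


/-- The closed form of `α_j^{(m)}` in the linear-detrending case
(also valid for `j = 0`, where it reduces to `α_0^{(m)} = (m²+2m−3)/15`). -/
noncomputable def alphaF (j m : ℕ) : ℝ :=
  (((m : ℝ) - j) * ((m : ℝ) + 1 - j) * ((m : ℝ) + 2 - j) /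
      ((m : ℝ) * ((m : ℝ) + 1) * ((m : ℝ) + 2))) *
    (((m : ℝ) ^ 2 + 2 * m - 3) / 15 - ((j : ℝ) ^ 2 + 3 * j * ((m : ℝ) + 1)) / 10)

/-- `β_j^{(m)} := α_j^{(m)} / α_0^{(m)}`. -/
noncomputable def betaF (j m : ℕ) : ℝ :=
  alphaF j m / (((m : ℝ) ^ 2 + 2 * m - 3) / 15)

/-- The sign-change threshold `j₀(m) = [√(105m² + 210m + 9) − 9(m+1)]/6`. -/
noncomputable def j₀ (m : ℕ) : ℝ :=
  (Real.sqrt (105 * (m : ℝ) ^ 2 + 210 * m + 9) - 9 * ((m : ℝ) + 1)) / 6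

set_option maxHeartbeats 800000 in
private lemma key_poly (a b : ℝ) (ha : 0 ≤ a) (hb : 0 ≤ b) (hab : 1 ≤ a + b) :
    0 ≤ 2 * ((a+b) * (a+b+4) * (a+b+1) * (a+b+2) * (a+b+3)) -
      (b+1) * (b+2) * (b+3) * (12*a^2 + 9*a*b + 18*a - 2*(a+b)*(a+b+4)) := by
  have h1 : (0:ℝ) ≤ 12 * a * (a + b - 1) :=
    mul_nonneg (by linarith) (by linarith)
  have h2 : (0:ℝ) ≤ 96*b + 200*b^2 + 140*b^3 + 40*b^4 + 4*b^5 + 48*a*b + 95*a*b^2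
      + 40*a*b^3 + 5*a*b^4 + 28*a^2 + 100*a^2*b + 60*a^2*b^2 + 10*a^2*b^3 + 70*a^3
      + 80*a^3*b + 20*a^3*b^2 + 20*a^4 + 10*a^4*b + 2*a^5 := by positivity
  nlinarith [h1, h2]

set_option maxHeartbeats 800000 in
theorem betaF_sign_change (m : ℕ) (hm : 2 ≤ m) :
    (∀ j : ℕ, j < m → (j : ℝ) < j₀ m → 0 < betaF j m ∧ betaF j m ≤ 1) ∧
    (∀ j : ℕ, j < m → j₀ m ≤ (j : ℝ) → -1 ≤ betaF j m ∧ betaF j m ≤ 0) := by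
  have hM : (2:ℝ) ≤ (m:ℝ) := by exact_mod_cast hm
  set M : ℝ := (m:ℝ) with hMdef
  have hA : (0:ℝ) < (M ^ 2 + 2 * M - 3) / 15 := by nlinarith
  have hD : (0:ℝ) < M * (M + 1) * (M + 2) := by nlinarith
  have ht : (0:ℝ) ≤ 105 * M ^ 2 + 210 * M + 9 := by nlinarith
  have hs := Real.sq_sqrt ht
  have hsnn := Real.sqrt_nonneg (105 * M ^ 2 + 210 * M + 9)
  constructor
  · intro j hj hjlt
    have hj0 : (0:ℝ) ≤ (j:ℝ) := Nat.cast_nonneg j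
    have hjm : (j:ℝ) ≤ M - 1 := by
      have h := Nat.succ_le_of_lt hj
      have : (j:ℝ) + 1 ≤ M := by rw [hMdef]; exact_mod_cast h
      linarith
    have hx : 6 * (j:ℝ) + 9 * (M + 1) < Real.sqrt (105 * M ^ 2 + 210 * M + 9) := by
      unfold j₀ at hjlt; rw [← hMdef] at hjlt; linarith
    have hxnn : (0:ℝ) ≤ 6 * (j:ℝ) + 9 * (M + 1) := by linarith
    have hq : (j:ℝ) ^ 2 + 3 * j * (M + 1) < (2 * M ^ 2 + 4 * M - 6) / 3 := by
      linarith [mul_self_lt_mul_self hxnn hx, hs]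
    have hQ : (0:ℝ) < (M ^ 2 + 2 * M - 3) / 15 - ((j:ℝ) ^ 2 + 3 * j * (M + 1)) / 10 := by
      nlinarith
    have hN : (0:ℝ) < (M - j) * (M + 1 - j) * (M + 2 - j) :=
      mul_pos (mul_pos (by linarith) (by linarith)) (by linarith)
    have halpha : alphaF j m = ((M - j) * (M + 1 - j) * (M + 2 - j) *
        ((M ^ 2 + 2 * M - 3) / 15 - ((j:ℝ) ^ 2 + 3 * j * (M + 1)) / 10)) /
        (M * (M + 1) * (M + 2)) := by
      unfold alphaF; rw [← hMdef]; ring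
    constructor
    · unfold betaF
      apply div_pos _ hA
      rw [halpha]
      exact div_pos (mul_pos hN hQ) hD
    · unfold betaF
      rw [div_le_one hA, halpha, div_le_iff₀ hD]
      have hNle : (M - j) * (M + 1 - j) * (M + 2 - j) ≤ M * (M + 1) * (M + 2) := by
        nlinarith
      have hQle : (M ^ 2 + 2 * M - 3) / 15 - ((j:ℝ) ^ 2 + 3 * j * (M + 1)) / 10
          ≤ (M ^ 2 + 2 * M - 3) / 15 := by nlinarith
      have := mul_le_mul hNle hQle (le_of_lt hQ) (le_of_lt hD)
      linarith
  · intro j hj hjge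
    have hj0 : (0:ℝ) ≤ (j:ℝ) := Nat.cast_nonneg j
    have hjm : (j:ℝ) ≤ M - 1 := by
      have h := Nat.succ_le_of_lt hj
      have : (j:ℝ) + 1 ≤ M := by rw [hMdef]; exact_mod_cast h
      linarith
    have hq : (M ^ 2 + 2 * M - 3) / 15 - ((j:ℝ) ^ 2 + 3 * j * (M + 1)) / 10 ≤ 0 := by
      have hx : Real.sqrt (105 * M ^ 2 + 210 * M + 9) ≤ 6 * (j:ℝ) + 9 * (M + 1) := by
        unfold j₀ at hjge; rw [← hMdef] at hjge; linarith
      linarith [mul_self_le_mul_self hsnn hx, hs]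
    have hN : (0:ℝ) ≤ (M - j) * (M + 1 - j) * (M + 2 - j) :=
      mul_nonneg (mul_nonneg (by linarith) (by linarith)) (by linarith)
    have halpha : alphaF j m = ((M - j) * (M + 1 - j) * (M + 2 - j) *
        ((M ^ 2 + 2 * M - 3) / 15 - ((j:ℝ) ^ 2 + 3 * j * (M + 1)) / 10)) /
        (M * (M + 1) * (M + 2)) := by
      unfold alphaF; rw [← hMdef]; ring
    constructor
    · unfold betaF
      rw [le_div_iff₀ hA, halpha, le_div_iff₀ hD]
      have hkey := key_poly (j:ℝ) (M - 1 - j) hj0 (by linarith) (by linarith)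
      have hsub : M = (j:ℝ) + (M - 1 - j) + 1 := by ring
      linarith [hkey]
    · unfold betaF
      apply div_nonpos_of_nonpos_of_nonneg _ (le_of_lt hA)
      rw [halpha]
      exact div_nonpos_of_nonpos_of_nonneg (mul_nonpos_of_nonneg_of_nonpos hN hq) (le_of_lt hD)
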